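/- arXiv:0807.4846 — 8 statements merged into one kernel-verified Lean document; each statement's English description precedes it below -/
import Mathlib

section
/- If X and Y are subspaces of F_q^n with identifying vectors v(X) and v(Y), then d_S(X,Y) ≥ d_H(v(X), v(Y)), where d_S is the subspace distance and d_H is the Hamming distance. -/
open Module

/-- The subspace distance `d_S(U,V) = dim U + dim V - 2 dim (U ⊓ V)`. -/
noncomputable def subspaceDist {F M : Type*} [Field F] [AddCommGroup M] [Module F M]
    (U V : Submodule F M) : ℤ :=
  (finrank F U : ℤ) + (finrank F V : ℤ) - 2 * (finrank F ↥(U ⊓ V) : ℤ)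

/-- `v : Fin n → Bool` is the identifying vector of the subspace `X` of `F_q^n`:
its ones are exactly the pivot positions of a generator matrix of `X` in reduced row
echelon form. -/
def IsIdentifyingVector {F : Type*} [Field F] {n : ℕ}
    (X : Submodule F (Fin n → F)) (v : Fin n → Bool) : Prop :=
  ∃ (k : ℕ) (M : Matrix (Fin k) (Fin n) F) (p : Fin k → Fin n),
    StrictMono p ∧
    (∀ i, M i (p i) = 1) ∧
    (∀ i j, j < p i → M i j = 0) ∧
    (∀ i i', i' ≠ i → M i' (p i) = 0) ∧
    LinearIndependent F (fun i => M i) ∧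
    Submodule.span F (Set.range fun i => M i) = X ∧
    (∀ j, v j = true ↔ ∃ i, p i = j)

lemma leading_is_pivot {F : Type*} [Field F] {n k : ℕ} (M : Matrix (Fin k) (Fin n) F)
    (p : Fin k → Fin n) (hmono : StrictMono p)
    (hpiv1 : ∀ i, M i (p i) = 1) (hlead0 : ∀ i j, j < p i → M i j = 0)
    (hcol0 : ∀ i i', i' ≠ i → M i' (p i) = 0)
    (z : Fin n → F) (hz : z ∈ Submodule.span F (Set.range fun i => M i))
    (j : Fin n) (hj : z j ≠ 0) (hjmin : ∀ j', j' < j → z j' = 0) :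
    ∃ i, p i = j := by
  classical
  rw [Finsupp.mem_span_range_iff_exists_finsupp] at hz
  obtain ⟨c, hc⟩ := hz
  have hcz : ∀ j', z j' = ∑ i, c i * M i j' := by
    intro j'
    rw [← hc]
    rw [Finsupp.sum_fintype]
    · simp [Finset.sum_apply]
    · intro i; simp
  set T := Finset.univ.filter (fun i => c i ≠ 0) with hT
  have hTne : T.Nonempty := by
    by_contra h
    apply hj
    rw [hcz]
    apply Finset.sum_eq_zero
    intro i _
    have : c i = 0 := by
      by_contra hci
      exact h ⟨i, Finset.mem_filter.mpr ⟨Finset.mem_univ _, hci⟩⟩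
    simp [this]
  set i0 := T.min' hTne with hi0def
  have hi0 : c i0 ≠ 0 := (Finset.mem_filter.mp (T.min'_mem hTne)).2
  have h1 : z (p i0) = c i0 := by
    rw [hcz]
    rw [Finset.sum_eq_single i0]
    · rw [hpiv1, mul_one]
    · intro i _ hne
      rw [hcol0 i0 i hne, mul_zero]
    · intro h; exact absurd (Finset.mem_univ i0) h
  have h2 : ∀ j', j' < p i0 → z j' = 0 := by
    intro j' hj'
    rw [hcz]
    apply Finset.sum_eq_zero
    intro i _
    rcases eq_or_ne (c i) 0 with h | h
    · simp [h]
    · have hiT : i ∈ T := Finset.mem_filter.mpr ⟨Finset.mem_univ _, h⟩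
      have : i0 ≤ i := T.min'_le i hiT
      have : p i0 ≤ p i := hmono.monotone this
      rw [hlead0 i j' (lt_of_lt_of_le hj' this), mul_zero]
  refine ⟨i0, ?_⟩
  rcases lt_trichotomy (p i0) j with h | h | h
  · exact absurd (hjmin _ h ▸ h1.symm) hi0
  · exact h
  · exact absurd (h2 j h) hj

/-- If `X` and `Y` are subspaces of `F_q^n` with identifying vectors `v(X)` and `v(Y)`,
then `d_S(X,Y) ≥ d_H(v(X),v(Y))`. -/
theorem subspaceDist_ge_hammingDist_identifying (F : Type*) [Field F] [Fintype F] (n : ℕ)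
    (X Y : Submodule F (Fin n → F)) (vX vY : Fin n → Bool)
    (hX : IsIdentifyingVector X vX) (hY : IsIdentifyingVector Y vY) :
    (hammingDist vX vY : ℤ) ≤ subspaceDist X Y := by
  classical
  obtain ⟨k, M, p, hpm, hp1, hp0, hpc, hMli, hMsp, hvX⟩ := hX
  obtain ⟨l, N, q, hqm, hq1, hq0, hqc, hNli, hNsp, hvY⟩ := hY
  set A : Finset (Fin n) := Finset.univ.filter (fun j => vX j = true) with hA
  set B : Finset (Fin n) := Finset.univ.filter (fun j => vY j = true) with hB
  -- cardinalities of supports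
  have hAim : A = Finset.image p Finset.univ := by
    ext j
    simp only [hA, Finset.mem_filter, Finset.mem_univ, true_and, Finset.mem_image]
    rw [hvX j]
  have hBim : B = Finset.image q Finset.univ := by
    ext j
    simp only [hB, Finset.mem_filter, Finset.mem_univ, true_and, Finset.mem_image]
    rw [hvY j]
  have hAcard : A.card = k := by
    rw [hAim, Finset.card_image_of_injective _ hpm.injective, Finset.card_univ,
      Fintype.card_fin]
  have hBcard : B.card = l := by
    rw [hBim, Finset.card_image_of_injective _ hqm.injective, Finset.card_univ,
      Fintype.card_fin]
  -- dimensions of X and Y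
  have hdX : finrank F X = k := by
    rw [← hMsp, finrank_span_eq_card hMli, Fintype.card_fin]
  have hdY : finrank F Y = l := by
    rw [← hNsp, finrank_span_eq_card hNli, Fintype.card_fin]
  -- dimension of intersection
  set C : Finset (Fin n) := A ∩ B with hC
  have hdI : finrank F ↥(X ⊓ Y) ≤ C.card := by
    let φ : ↥(X ⊓ Y) →ₗ[F] (↥C → F) :=
      LinearMap.pi fun j => (LinearMap.proj (j : Fin n)).comp (Submodule.subtype _)
    have hφ : Function.Injective φ := by
      rw [← LinearMap.ker_eq_bot, LinearMap.ker_eq_bot']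
      intro z hz
      ext1
      by_contra hz0
      set s := Finset.univ.filter (fun j => (z : Fin n → F) j ≠ 0) with hs
      have hsne : s.Nonempty := by
        by_contra h
        apply hz0
        ext j
        by_contra hj
        exact h ⟨j, Finset.mem_filter.mpr ⟨Finset.mem_univ _, hj⟩⟩
      set j := s.min' hsne with hjdef
      have hj : (z : Fin n → F) j ≠ 0 := (Finset.mem_filter.mp (s.min'_mem hsne)).2
      have hjmin : ∀ j', j' < j → (z : Fin n → F) j' = 0 := by
        intro j' hj'
        by_contra h
        exact absurd (s.min'_le j' (Finset.mem_filter.mpr ⟨Finset.mem_univ _, h⟩))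
          (not_le.mpr hj')
      have hzX : (z : Fin n → F) ∈ X := z.2.1
      have hzY : (z : Fin n → F) ∈ Y := z.2.2
      obtain ⟨i, hi⟩ := leading_is_pivot M p hpm hp1 hp0 hpc _ (hMsp ▸ hzX) j hj hjmin
      obtain ⟨i', hi'⟩ := leading_is_pivot N q hqm hq1 hq0 hqc _ (hNsp ▸ hzY) j hj hjmin
      have hjC : j ∈ C := by
        rw [hC, Finset.mem_inter, hAim, hBim]
        exact ⟨Finset.mem_image.mpr ⟨i, Finset.mem_univ _, hi⟩,
          Finset.mem_image.mpr ⟨i', Finset.mem_univ _, hi'⟩⟩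
      have := congrFun hz ⟨j, hjC⟩
      exact hj this
    calc finrank F ↥(X ⊓ Y) ≤ finrank F (↥C → F) :=
          LinearMap.finrank_le_finrank_of_injective hφ
      _ = C.card := by rw [Module.finrank_pi, Fintype.card_coe]
  -- Hamming distance identity
  have hHam : hammingDist vX vY + C.card = (A ∪ B).card := by
    have heq : Finset.univ.filter (fun j => vX j ≠ vY j) = (A ∪ B) \ C := by
      ext j
      simp only [hA, hB, hC, Finset.mem_filter, Finset.mem_univ, true_and,
        Finset.mem_sdiff, Finset.mem_union, Finset.mem_inter]
      cases hx : vX j <;> cases hy : vY j <;> simp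
    have hCsub : C ⊆ A ∪ B := (Finset.inter_subset_left).trans Finset.subset_union_left
    have hle := Finset.card_le_card hCsub
    rw [hammingDist, heq, Finset.card_sdiff_of_subset hCsub]
    omega
  have hUI : (A ∪ B).card + C.card = A.card + B.card := by
    rw [hC]; exact Finset.card_union_add_card_inter A B
  simp only [subspaceDist]
  rw [hdX, hdY]
  omega
end

section
/- Let F be an m × η Ferrers diagram and let C be an F_q-linear code of m × η matrices supported on F in which every nonzero codeword has rank at least δ. Fix i with 0 ≤ i ≤ δ - 1 and let ν_i be the number of dots of F not contained in the first i rows and not in the rightmost δ - 1 - i columns. Then dim C ≤ ν_i. Consequently dim C ≤ min over 0 ≤ i ≤ δ-1 of ν_i. -/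
open Module Matrix

/-- A matrix whose nonzero entries lie in the first `i` rows or the last `k` columns
has rank at most `i + k`. -/
lemma rank_le_of_support_bound (F : Type*) [Field F] {m η : ℕ} (i k : ℕ)
    (A : Matrix (Fin m) (Fin η) F)
    (h : ∀ (r : Fin m) (c : Fin η), i ≤ (r : ℕ) → (c : ℕ) < η - k → A r c = 0) :
    A.rank ≤ i + k := by
  classical
  rw [Matrix.rank_eq_finrank_span_cols]
  set T : Finset (Fin m → F) :=
      ((Finset.univ.filter fun r : Fin m => (r : ℕ) < i).image fun r => Pi.single r (1 : F)) ∪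
      ((Finset.univ.filter fun c : Fin η => η - k ≤ (c : ℕ)).image fun c => Aᵀ c) with hT
  have hspan : Submodule.span F (Set.range Aᵀ) ≤ Submodule.span F (T : Set (Fin m → F)) := by
    rw [Submodule.span_le]
    rintro _ ⟨c, rfl⟩
    by_cases hc : η - k ≤ (c : ℕ)
    · apply Submodule.subset_span
      simp only [hT, Finset.coe_union, Set.mem_union, Finset.coe_image, Set.mem_image,
        Finset.mem_coe, Finset.mem_filter, Finset.mem_univ, true_and]
      exact Or.inr ⟨c, hc, rfl⟩
    · push_neg at hc
      have hcol : Aᵀ c = ∑ r ∈ Finset.univ.filter (fun r : Fin m => (r : ℕ) < i),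
          (A r c) • (Pi.single r 1 : Fin m → F) := by
        funext r'
        simp only [Finset.sum_apply, Pi.smul_apply, Pi.single_apply, smul_eq_mul, mul_ite,
          mul_one, mul_zero, Matrix.transpose_apply]
        rw [Finset.sum_ite_eq (Finset.univ.filter (fun r : Fin m => (r : ℕ) < i)) r'
          (fun r => A r c)]
        by_cases hr' : (r' : ℕ) < i
        · simp [hr']
        · simp only [Finset.mem_filter, Finset.mem_univ, true_and, hr', if_false]
          exact h r' c (le_of_not_gt hr') hc
      rw [hcol]
      refine Submodule.sum_mem _ fun r hr => Submodule.smul_mem _ _ (Submodule.subset_span ?_)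
      simp only [Finset.mem_filter, Finset.mem_univ, true_and] at hr
      simp only [hT, Finset.coe_union, Set.mem_union, Finset.coe_image, Set.mem_image,
        Finset.mem_coe, Finset.mem_filter, Finset.mem_univ, true_and]
      exact Or.inl ⟨r, hr, rfl⟩
  have h1 : (Finset.univ.filter fun r : Fin m => (r : ℕ) < i).card ≤ i := by
    calc (Finset.univ.filter fun r : Fin m => (r : ℕ) < i).card
        ≤ (Finset.range i).card := by
          apply Finset.card_le_card_of_injOn (fun r : Fin m => (r : ℕ))
          · intro r hr
            simp only [Finset.mem_coe, Finset.mem_filter, Finset.mem_univ, true_and] at hr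
            simpa using hr
          · intro a _ b _ hab
            exact Fin.val_injective hab
      _ = i := Finset.card_range i
  have h2 : (Finset.univ.filter fun c : Fin η => η - k ≤ (c : ℕ)).card ≤ k := by
    calc (Finset.univ.filter fun c : Fin η => η - k ≤ (c : ℕ)).card
        ≤ (Finset.range k).card := by
          apply Finset.card_le_card_of_injOn (fun c : Fin η => (c : ℕ) - (η - k))
          · intro c hc
            simp only [Finset.mem_coe, Finset.mem_filter, Finset.mem_univ, true_and] at hc
            have := c.isLt
            simp only [Finset.mem_coe, Finset.mem_range]
            omega
          · intro a ha b hb hab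
            simp only [Finset.mem_filter, Finset.mem_univ, true_and, Finset.mem_coe] at ha hb
            have ha' := a.isLt
            have hb' := b.isLt
            have hab' : (a : ℕ) - (η - k) = (b : ℕ) - (η - k) := hab
            apply Fin.ext
            omega
      _ = k := Finset.card_range k
  have hcard : T.card ≤ i + k := by
    calc T.card ≤ _ + _ := Finset.card_union_le _ _
      _ ≤ i + k := add_le_add ((Finset.card_image_le).trans h1) ((Finset.card_image_le).trans h2)
  calc finrank F (Submodule.span F (Set.range Aᵀ))
      ≤ finrank F (Submodule.span F (T : Set (Fin m → F))) := Submodule.finrank_mono hspan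
    _ ≤ T.card := finrank_span_finset_le_card T
    _ ≤ i + k := hcard

/-- Upper bound on the dimension of a Ferrers diagram rank-metric code.
`D` is an `m × η` Ferrers diagram (dots are right-justified in each row and the rows
have weakly decreasing length from top to bottom, i.e. `D` is closed upwards and to
the right).  If `C` is an `F_q`-linear code of `m × η` matrices supported on `D` in
which every nonzero codeword has rank at least `δ`, then for every `0 ≤ i ≤ δ - 1`,
`dim C ≤ ν_i`, where `ν_i` is the number of dots of `D` not contained in the first `i`
rows nor in the rightmost `δ - 1 - i` columns.  (Consequently `dim C ≤ min_i ν_i`.) -/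
theorem ferrers_rank_metric_bound (F : Type*) [Field F] [Fintype F] (m η δ : ℕ)
    (D : Finset (Fin m × Fin η))
    (hright : ∀ p ∈ D, ∀ c : Fin η, p.2 ≤ c → (p.1, c) ∈ D)
    (hup : ∀ p ∈ D, ∀ r : Fin m, r ≤ p.1 → (r, p.2) ∈ D)
    (C : Submodule F (Matrix (Fin m) (Fin η) F))
    (hsupp : ∀ A ∈ C, ∀ r c, (r, c) ∉ D → A r c = 0)
    (hrank : ∀ A ∈ C, A ≠ 0 → δ ≤ A.rank)
    (i : ℕ) (hi : i ≤ δ - 1) :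
    finrank F C ≤
      (D.filter (fun p => i ≤ (p.1 : ℕ) ∧ (p.2 : ℕ) < η - (δ - 1 - i))).card := by
  classical
  set k := δ - 1 - i with hk
  set S := D.filter (fun p => i ≤ (p.1 : ℕ) ∧ (p.2 : ℕ) < η - k) with hS
  -- key: a codeword vanishing on S is zero
  have key : ∀ A ∈ C, (∀ p ∈ S, A p.1 p.2 = 0) → A = 0 := by
    intro A hA hAS
    have hzero : ∀ (r : Fin m) (c : Fin η), i ≤ (r : ℕ) → (c : ℕ) < η - k → A r c = 0 := by
      intro r c hr hc
      by_cases hD : (r, c) ∈ D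
      · exact hAS (r, c) (Finset.mem_filter.mpr ⟨hD, hr, hc⟩)
      · exact hsupp A hA r c hD
    by_contra hne
    have hδ : δ ≤ A.rank := hrank A hA hne
    have hle : A.rank ≤ i + k := rank_le_of_support_bound F i k A hzero
    have hδ1 : δ ≠ 0 := by
      intro h0
      subst h0
      simp only [Nat.zero_sub, Nat.le_zero] at hi
      subst hi
      have : A = 0 := by
        funext r c
        exact hzero r c (Nat.zero_le _) (by have := c.isLt; omega)
      exact hne this
    omega
  -- the evaluation map on S is injective
  let φ : C →ₗ[F] (↥S → F) :=
    { toFun := fun A p => (A : Matrix (Fin m) (Fin η) F) p.1.1 p.1.2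
      map_add' := fun A B => rfl
      map_smul' := fun c A => rfl }
  have hinj : Function.Injective φ := by
    rw [← LinearMap.ker_eq_bot, eq_bot_iff]
    intro A hA
    simp only [LinearMap.mem_ker] at hA
    have : (A : Matrix (Fin m) (Fin η) F) = 0 := by
      apply key _ A.2
      intro p hp
      exact congrFun hA ⟨p, hp⟩
    exact (Submodule.mem_bot F).mpr (Subtype.coe_injective (this.trans (ZeroMemClass.coe_zero _).symm))
  have := LinearMap.finrank_le_finrank_of_injective hinj
  rwa [Module.finrank_pi, Fintype.card_coe] at this
end

section
/- Any maximum rank distance [m × η, m(η - δ + 1), δ] rank-metric code C' contains, as the subcode of codewords vanishing outside a Ferrers diagram F whose rightmost δ-1 columns are full (each with m dots, m ≥ η), a linear subcode of dimension at least Σ_{i=1}^{η-δ+1} γ_i, where γ_i is the number of dots in the i-th column of F. -/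
open Module

/-- Any MRD `[m × η, m(η - δ + 1), δ]` rank-metric code `C'` contains, as the subcode
of codewords vanishing outside a Ferrers diagram `D` whose rightmost `δ - 1` columns
are full (each with `m` dots, `m ≥ η`), a linear subcode of dimension at least
`∑_{i=1}^{η-δ+1} γ_i`, where `γ_i` is the number of dots in the `i`-th column of `D`. -/
theorem mrd_ferrers_subcode_dim (F : Type*) [Field F] [Fintype F]
    (m η δ : ℕ) (hδ : 1 ≤ δ) (hδη : δ ≤ η) (hηm : η ≤ m)
    (C' : Submodule F (Matrix (Fin m) (Fin η) F))
    (hdim : finrank F C' = m * (η - δ + 1))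
    (hrank : ∀ A ∈ C', A ≠ 0 → δ ≤ A.rank)
    (D : Finset (Fin m × Fin η))
    (hright : ∀ p ∈ D, ∀ c : Fin η, p.2 ≤ c → (p.1, c) ∈ D)
    (hup : ∀ p ∈ D, ∀ r : Fin m, r ≤ p.1 → (r, p.2) ∈ D)
    (hfull : ∀ c : Fin η, η - (δ - 1) ≤ (c : ℕ) → ∀ r : Fin m, (r, c) ∈ D) :
    ∃ Csub : Submodule F (Matrix (Fin m) (Fin η) F),
      (∀ A, A ∈ Csub ↔ (A ∈ C' ∧ ∀ r c, (r, c) ∉ D → A r c = 0)) ∧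
      (∑ c ∈ Finset.univ.filter (fun c : Fin η => (c : ℕ) < η - δ + 1),
          (D.filter (fun p => p.2 = c)).card) ≤ finrank F Csub := by
  classical
  set k := η - δ + 1 with hk
  set S : Finset (Fin m × Fin η) := Dᶜ with hS
  let φ : Matrix (Fin m) (Fin η) F →ₗ[F] ({x // x ∈ S} → F) :=
    LinearMap.pi (fun p : {x // x ∈ S} =>
      { toFun := fun A => A p.1.1 p.1.2,
        map_add' := fun _ _ => rfl,
        map_smul' := fun _ _ => rfl })
  refine ⟨C' ⊓ LinearMap.ker φ, ?_, ?_⟩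
  · intro A
    simp only [Submodule.mem_inf, LinearMap.mem_ker]
    constructor
    · rintro ⟨h1, h2⟩
      refine ⟨h1, fun r c hrc => ?_⟩
      have := congrFun h2 ⟨(r, c), by simpa [hS] using hrc⟩
      exact this
    · rintro ⟨h1, h2⟩
      refine ⟨h1, funext fun p => ?_⟩
      have hp : (p.1.1, p.1.2) ∉ D := by
        have h : ↑p ∈ Dᶜ := p.2
        exact Finset.mem_compl.mp h
      exact h2 p.1.1 p.1.2 hp
  · -- counting
    set T := ∑ c ∈ Finset.univ.filter (fun c : Fin η => (c : ℕ) < k),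
        (D.filter (fun p => p.2 = c)).card with hT
    -- fibers of full columns have card ≥ m
    have hfiber : ∀ c : Fin η, ¬ ((c : ℕ) < k) → m ≤ (D.filter (fun p => p.2 = c)).card := by
      intro c hc
      have hc' : η - (δ - 1) ≤ (c : ℕ) := by omega
      have hinj : Function.Injective (fun r : Fin m => (r, c)) :=
        fun a b h => congrArg Prod.fst h
      calc m = (Finset.univ.image (fun r : Fin m => (r, c))).card := by
              rw [Finset.card_image_of_injective _ hinj, Finset.card_univ, Fintype.card_fin]
        _ ≤ (D.filter (fun p => p.2 = c)).card := by
              apply Finset.card_le_card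
              intro p hp
              simp only [Finset.mem_image, Finset.mem_univ, true_and] at hp
              obtain ⟨r, rfl⟩ := hp
              exact Finset.mem_filter.mpr ⟨hfull c hc' r, rfl⟩
    -- card of D split over columns
    have hDcard : D.card = ∑ c : Fin η, (D.filter (fun p => p.2 = c)).card :=
      Finset.card_eq_sum_card_fiberwise (fun p _ => Finset.mem_univ p.2)
    have hsplit : D.card = T + ∑ c ∈ Finset.univ.filter (fun c : Fin η => ¬ ((c : ℕ) < k)),
        (D.filter (fun p => p.2 = c)).card := by
      rw [hDcard, hT, Finset.sum_filter_add_sum_filter_not]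
    -- number of full columns
    have hcolcard : (Finset.univ.filter (fun c : Fin η => ¬ ((c : ℕ) < k))).card = η - k := by
      have himg : ((Finset.univ.filter (fun c : Fin η => ¬ ((c : ℕ) < k))).image Fin.val)
          = Finset.Ico k η := by
        ext n
        simp only [Finset.mem_image, Finset.mem_filter, Finset.mem_univ, true_and,
          Finset.mem_Ico, not_lt]
        constructor
        · rintro ⟨c, hc, rfl⟩; exact ⟨hc, c.2⟩
        · rintro ⟨h1, h2⟩; exact ⟨⟨n, h2⟩, h1, rfl⟩
      have := congrArg Finset.card himg
      rwa [Finset.card_image_of_injective _ Fin.val_injective, Nat.card_Ico] at this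
    have hRbig : (η - k) * m ≤ ∑ c ∈ Finset.univ.filter (fun c : Fin η => ¬ ((c : ℕ) < k)),
        (D.filter (fun p => p.2 = c)).card := by
      calc (η - k) * m
          = ∑ _c ∈ Finset.univ.filter (fun c : Fin η => ¬ ((c : ℕ) < k)), m := by
            rw [Finset.sum_const, hcolcard, smul_eq_mul]
        _ ≤ _ := Finset.sum_le_sum (fun c hc => hfiber c (by simpa using (Finset.mem_filter.mp hc).2))
    -- rank-nullity
    let ψ := φ.comp C'.subtype
    have h1 : finrank F (LinearMap.range ψ) + finrank F (LinearMap.ker ψ) = finrank F C' :=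
      LinearMap.finrank_range_add_finrank_ker ψ
    have h2 : finrank F (LinearMap.range ψ) ≤ S.card := by
      have hle := (LinearMap.range ψ).finrank_le
      calc finrank F (LinearMap.range ψ) ≤ finrank F ({x // x ∈ S} → F) := hle
        _ = S.card := by simp [Module.finrank_pi]
    have h3 : finrank F (LinearMap.ker ψ)
        = finrank F ↥(C' ⊓ LinearMap.ker φ) := by
      have hker : LinearMap.ker ψ = (C' ⊓ LinearMap.ker φ).comap C'.subtype := by
        ext x
        simp only [LinearMap.mem_ker, Submodule.mem_comap, Submodule.mem_inf,
          LinearMap.comp_apply, Submodule.subtype_apply, ψ]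
        exact ⟨fun h => ⟨x.2, h⟩, fun h => h.2⟩
      rw [hker]
      exact LinearEquiv.finrank_eq (Submodule.comapSubtypeEquivOfLe inf_le_left)
    have hScard : S.card + D.card = m * η := by
      rw [hS, Finset.card_compl]
      have hD : D.card ≤ Fintype.card (Fin m × Fin η) := Finset.card_le_univ D
      simp only [Fintype.card_prod, Fintype.card_fin] at hD ⊢
      omega
    have hmul : m * k + (η - k) * m = m * η := by
      have hkη : k ≤ η := by omega
      rw [mul_comm m k, mul_comm m η, Nat.sub_mul]
      have : k * m ≤ η * m := Nat.mul_le_mul_right m hkη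
      omega
    rw [← h3]
    -- linear arithmetic
    set a := m * k with ha
    set b := (η - k) * m with hb
    set c := m * η with hc
    omega
end

section
/- Let C be a linear rank-metric code of k × (n-k) matrices over F_q with q^ϱ codewords and minimum rank distance δ. Then the lifted code {rowspace([I_k | A]) : A ∈ C}, consisting of the row spaces of the matrices obtained by concatenating the k × k identity with each codeword, is a set of q^ϱ distinct k-dimensional subspaces of F_q^n with pairwise subspace distance at least 2δ. -/
open Module Matrix

/-- The row space of the `k × n` matrix `[I_k | A]` (a subspace of `F_q^n`, with
`n = k + m` coordinates indexed by `Fin k ⊕ Fin m`). -/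
noncomputable def liftSpan {F : Type*} [Field F] {k m : ℕ}
    (A : Matrix (Fin k) (Fin m) F) : Submodule F ((Fin k ⊕ Fin m) → F) :=
  Submodule.span F (Set.range fun i => Matrix.fromCols (1 : Matrix (Fin k) (Fin k) F) A i)

section Aux

variable {F : Type*} [Field F] {k m : ℕ}

lemma liftSpan_eq_range (A : Matrix (Fin k) (Fin m) F) :
    liftSpan A = LinearMap.range (Matrix.fromCols (1 : Matrix (Fin k) (Fin k) F) A).vecMulLinear :=
  (range_vecMulLinear _).symm

lemma vecMul_fromColumns_one (A : Matrix (Fin k) (Fin m) F) (c : Fin k → F) :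
    c ᵥ* Matrix.fromCols (1 : Matrix (Fin k) (Fin k) F) A = Sum.elim c (c ᵥ* A) := by
  rw [Matrix.vecMul_fromCols, Matrix.vecMul_one]

lemma mem_liftSpan (A : Matrix (Fin k) (Fin m) F) (x : (Fin k ⊕ Fin m) → F) :
    x ∈ liftSpan A ↔ x = Sum.elim (x ∘ Sum.inl) ((x ∘ Sum.inl) ᵥ* A) := by
  rw [liftSpan_eq_range]
  constructor
  · rintro ⟨c, rfl⟩
    simp only [Matrix.vecMulLinear_apply, vecMul_fromColumns_one]
    have : (Sum.elim c (c ᵥ* A)) ∘ Sum.inl = c := rfl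
    rw [this]
  · intro h
    exact ⟨x ∘ Sum.inl, by rw [Matrix.vecMulLinear_apply, vecMul_fromColumns_one, ← h]⟩

lemma vecMulLinear_fromColumns_one_injective (A : Matrix (Fin k) (Fin m) F) :
    Function.Injective (Matrix.fromCols (1 : Matrix (Fin k) (Fin k) F) A).vecMulLinear := by
  intro c d h
  have h' : Sum.elim c (c ᵥ* A) = Sum.elim d (d ᵥ* A) := by
    simpa only [Matrix.vecMulLinear_apply, vecMul_fromColumns_one] using h
  funext i
  exact congrFun h' (Sum.inl i)

lemma finrank_liftSpan (A : Matrix (Fin k) (Fin m) F) :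
    Module.finrank F (liftSpan A) = k := by
  rw [liftSpan_eq_range,
    LinearMap.finrank_range_of_inj (vecMulLinear_fromColumns_one_injective A),
    Module.finrank_fin_fun]

lemma liftSpan_inj {A B : Matrix (Fin k) (Fin m) F} (h : liftSpan A = liftSpan B) : A = B := by
  have key : ∀ c : Fin k → F, c ᵥ* A = c ᵥ* B := by
    intro c
    have hx : Sum.elim c (c ᵥ* A) ∈ liftSpan A := by
      rw [mem_liftSpan]; rfl
    rw [h, mem_liftSpan] at hx
    have hc : (Sum.elim c (c ᵥ* A)) ∘ Sum.inl = c := rfl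
    rw [hc] at hx
    have := congrArg (· ∘ Sum.inr) hx
    exact this
  ext i j
  have := congrFun (key (Pi.single i 1)) j
  rwa [Matrix.single_one_vecMul, Matrix.single_one_vecMul] at this

lemma liftSpan_inf (A B : Matrix (Fin k) (Fin m) F) :
    liftSpan A ⊓ liftSpan B =
      Submodule.map (Matrix.fromCols (1 : Matrix (Fin k) (Fin k) F) A).vecMulLinear
        (LinearMap.ker (A - B).vecMulLinear) := by
  ext x
  simp only [Submodule.mem_inf, Submodule.mem_map, LinearMap.mem_ker,
    Matrix.vecMulLinear_apply]
  constructor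
  · rintro ⟨hA, hB⟩
    rw [mem_liftSpan] at hA hB
    refine ⟨x ∘ Sum.inl, ?_, ?_⟩
    · rw [Matrix.vecMul_sub]
      have h1 := congrArg (· ∘ Sum.inr) hA
      have h2 := congrArg (· ∘ Sum.inr) hB
      have : (x ∘ Sum.inl) ᵥ* A = (x ∘ Sum.inl) ᵥ* B := by
        rw [show ((x ∘ Sum.inl) ᵥ* A) = (Sum.elim (x ∘ Sum.inl) ((x ∘ Sum.inl) ᵥ* A)) ∘ Sum.inr
          from rfl, show ((x ∘ Sum.inl) ᵥ* B) = (Sum.elim (x ∘ Sum.inl) ((x ∘ Sum.inl) ᵥ* B)) ∘ Sum.inr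
          from rfl, ← hA, ← hB]
      rw [this, sub_self]
    · rw [vecMul_fromColumns_one, ← hA]
  · rintro ⟨c, hker, rfl⟩
    have hAB : c ᵥ* A = c ᵥ* B := by
      have h0 : c ᵥ* A - c ᵥ* B = 0 := by rw [← Matrix.vecMul_sub]; exact hker
      exact sub_eq_zero.mp h0
    constructor
    · rw [mem_liftSpan, vecMul_fromColumns_one]; rfl
    · rw [mem_liftSpan, vecMul_fromColumns_one]
      have hc : (Sum.elim c (c ᵥ* A)) ∘ Sum.inl = c := rfl
      rw [hc, ← hAB]

lemma finrank_liftSpan_inf (A B : Matrix (Fin k) (Fin m) F) :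
    Module.finrank F ↥(liftSpan A ⊓ liftSpan B) + (A - B).rank = k := by
  rw [liftSpan_inf]
  have hinj := vecMulLinear_fromColumns_one_injective A
  rw [LinearEquiv.finrank_eq
    (Submodule.equivMapOfInjective _ hinj (LinearMap.ker (A - B).vecMulLinear)).symm]
  have hr : (A - B).rank = Module.finrank F (LinearMap.range (A - B).vecMulLinear) := by
    rw [← Matrix.rank_transpose (A - B), Matrix.rank, Matrix.mulVecLin_transpose]
  rw [hr, add_comm, LinearMap.finrank_range_add_finrank_ker, Module.finrank_fin_fun]

end Aux

/-- If `C` is a linear rank-metric code of `k × (n-k)` matrices over `F_q` with `q^ϱ`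
codewords (dimension `ϱ`) and minimum rank distance `δ`, then the lifted code
`{rowspace [I_k | A] : A ∈ C}` is a set of `q^ϱ` distinct `k`-dimensional subspaces of
`F_q^n` with pairwise subspace distance at least `2δ`. -/
theorem lifted_code_is_constant_dimension_code (F : Type*) [Field F] [Fintype F]
    (k m ϱ δ : ℕ) (C : Submodule F (Matrix (Fin k) (Fin m) F))
    (hdim : finrank F C = ϱ)
    (hrank : ∀ A ∈ C, ∀ B ∈ C, A ≠ B → δ ≤ (A - B).rank) :
    (∀ A ∈ C, finrank F (liftSpan A) = k) ∧
    (∀ A ∈ C, ∀ B ∈ C, A ≠ B →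
      liftSpan A ≠ liftSpan B ∧ 2 * (δ : ℤ) ≤ subspaceDist (liftSpan A) (liftSpan B)) ∧
    Nat.card {U : Submodule F ((Fin k ⊕ Fin m) → F) | ∃ A ∈ C, U = liftSpan A} =
      Fintype.card F ^ ϱ := by
  refine ⟨fun A _ => finrank_liftSpan A, fun A hA B hB hAB => ?_, ?_⟩
  · refine ⟨fun h => hAB (liftSpan_inj h), ?_⟩
    have h1 := finrank_liftSpan_inf A B
    have h2 := hrank A hA B hB hAB
    unfold subspaceDist
    rw [finrank_liftSpan A, finrank_liftSpan B]
    have : (Module.finrank F ↥(liftSpan A ⊓ liftSpan B) : ℤ) = (k : ℤ) - ((A - B).rank : ℤ) := by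
      have := congrArg (Nat.cast : ℕ → ℤ) h1
      push_cast at this ⊢
      linarith
    rw [this]
    have : ((δ : ℤ)) ≤ ((A - B).rank : ℤ) := by exact_mod_cast h2
    linarith
  · have hset : {U : Submodule F ((Fin k ⊕ Fin m) → F) | ∃ A ∈ C, U = liftSpan A} =
        Set.range (fun A : C => liftSpan (A : Matrix (Fin k) (Fin m) F)) := by
      ext U
      simp only [Set.mem_setOf_eq, Set.mem_range, Subtype.exists]
      constructor
      · rintro ⟨A, hA, rfl⟩; exact ⟨A, hA, rfl⟩
      · rintro ⟨A, hA, rfl⟩; exact ⟨A, hA, rfl⟩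
    have hinj : Function.Injective (fun A : C => liftSpan (A : Matrix (Fin k) (Fin m) F)) := by
      intro A B h
      exact Subtype.ext (liftSpan_inj h)
    rw [hset, Nat.card_range_of_injective hinj]
    haveI : Fintype C := Fintype.ofFinite _
    rw [Nat.card_eq_fintype_card, card_eq_pow_finrank (K := F) (V := C), hdim]
end

section
/- Let C be a set of M subspaces of F_q^n with pairwise subspace distance at least d, let Q be an (n-1)-dimensional subspace of F_q^n, and let v ∈ F_q^n with v ∉ Q. Then the set C_Q ∪ C_{Q,v}, where C_Q = { X : X ∈ C, X ⊆ Q } and C_{Q,v} = { X ∩ Q : X ∈ C, v ∈ X }, is a set of subspaces of Q with pairwise subspace distance at least d - 1. -/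
open Module

lemma aux_rank {F : Type*} [Field F] {n : ℕ} (Q W : Submodule F (Fin n → F))
    (hQ : finrank F Q = n - 1) {v : Fin n → F} (hv : v ∉ Q) (hvW : v ∈ W) :
    (finrank F ↥(W ⊓ Q) : ℤ) = (finrank F W : ℤ) - 1 := by
  have hn : finrank F (Fin n → F) = n := by simp
  have hQne : Q ≠ ⊤ := fun h => hv (h ▸ Submodule.mem_top)
  have hQlt : finrank F Q < n := by
    have := Submodule.finrank_lt_finrank_of_lt (lt_top_iff_ne_top.mpr hQne)
    simpa [finrank_top, hn] using this
  have hn1 : 1 ≤ n := by omega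
  have htop : Q ⊔ W = ⊤ := by
    by_contra h
    have h1 : finrank F ↥(Q ⊔ W) < n := by
      have := Submodule.finrank_lt_finrank_of_lt (lt_top_iff_ne_top.mpr h)
      simpa [finrank_top, hn] using this
    have h2 : finrank F ↥(Q ⊔ W) ≤ finrank F Q := by omega
    have heq : Q = Q ⊔ W := Submodule.eq_of_le_of_finrank_le le_sup_left h2
    exact hv (heq ▸ (le_sup_right : W ≤ Q ⊔ W) hvW)
  have hsum := Submodule.finrank_sup_add_finrank_inf_eq Q W
  rw [htop, finrank_top, hn, hQ] at hsum
  rw [inf_comm] at hsum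
  omega

/-- Punctured codes.  Let `C` be a set of subspaces of `F_q^n` with pairwise subspace
distance at least `d`, let `Q` be an `(n-1)`-dimensional subspace of `F_q^n` and let
`v ∈ F_q^n` with `v ∉ Q`.  Then the punctured code `C_Q ∪ C_{Q,v}`, where
`C_Q = {X : X ∈ C, X ⊆ Q}` and `C_{Q,v} = {X ∩ Q : X ∈ C, v ∈ X}`, is a set of
subspaces of `Q` with pairwise subspace distance at least `d - 1`. -/
theorem punctured_code_distance (F : Type*) [Field F] [Fintype F] (n d : ℕ)
    (C : Set (Submodule F (Fin n → F)))
    (hd : ∀ X ∈ C, ∀ Y ∈ C, X ≠ Y → (d : ℤ) ≤ subspaceDist X Y)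
    (Q : Submodule F (Fin n → F)) (hQ : finrank F Q = n - 1)
    (v : Fin n → F) (hv : v ∉ Q) :
    (∀ Z ∈ ({X | X ∈ C ∧ X ≤ Q} ∪ {Z | ∃ X ∈ C, v ∈ X ∧ Z = X ⊓ Q} :
        Set (Submodule F (Fin n → F))), Z ≤ Q) ∧
    (∀ Z₁ ∈ ({X | X ∈ C ∧ X ≤ Q} ∪ {Z | ∃ X ∈ C, v ∈ X ∧ Z = X ⊓ Q} :
        Set (Submodule F (Fin n → F))),
      ∀ Z₂ ∈ ({X | X ∈ C ∧ X ≤ Q} ∪ {Z | ∃ X ∈ C, v ∈ X ∧ Z = X ⊓ Q} :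
        Set (Submodule F (Fin n → F))),
      Z₁ ≠ Z₂ → (d : ℤ) - 1 ≤ subspaceDist Z₁ Z₂) := by
  constructor
  · rintro Z (⟨_, hZQ⟩ | ⟨X, _, _, rfl⟩)
    · exact hZQ
    · exact inf_le_right
  · rintro Z₁ (⟨hX, hXQ⟩ | ⟨X, hX, hvX, rfl⟩) Z₂ (⟨hY, hYQ⟩ | ⟨Y, hY, hvY, rfl⟩) hne
    · -- both in C_Q
      have := hd Z₁ hX Z₂ hY hne
      linarith
    · -- Z₁ ∈ C_Q, Z₂ = Y ⊓ Q
      have hXY : Z₁ ≠ Y := fun h => hv (hXQ (h ▸ hvY))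
      have h1 : (finrank F ↥(Y ⊓ Q) : ℤ) = (finrank F Y : ℤ) - 1 := aux_rank Q Y hQ hv hvY
      have h2 : Z₁ ⊓ (Y ⊓ Q) = Z₁ ⊓ Y := by
        ext x
        simp only [Submodule.mem_inf]
        exact ⟨fun h => ⟨h.1, h.2.1⟩, fun h => ⟨h.1, h.2, hXQ h.1⟩⟩
      have := hd Z₁ hX Y hY hXY
      unfold subspaceDist at this ⊢
      rw [h2, h1]
      linarith
    · -- Z₁ = X ⊓ Q, Z₂ ∈ C_Q
      have hXY : X ≠ Z₂ := fun h => hv (hYQ (h ▸ hvX))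
      have h1 : (finrank F ↥(X ⊓ Q) : ℤ) = (finrank F X : ℤ) - 1 := aux_rank Q X hQ hv hvX
      have h2 : X ⊓ Q ⊓ Z₂ = X ⊓ Z₂ := by
        ext x
        simp only [Submodule.mem_inf]
        exact ⟨fun h => ⟨h.1.1, h.2⟩, fun h => ⟨⟨h.1, hYQ h.2⟩, h.2⟩⟩
      have := hd X hX Z₂ hY hXY
      unfold subspaceDist at this ⊢
      rw [h2, h1]
      linarith
    · -- both punctured
      have hXY : X ≠ Y := fun h => hne (by rw [h])
      have h1 : (finrank F ↥(X ⊓ Q) : ℤ) = (finrank F X : ℤ) - 1 := aux_rank Q X hQ hv hvX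
      have h2 : (finrank F ↥(Y ⊓ Q) : ℤ) = (finrank F Y : ℤ) - 1 := aux_rank Q Y hQ hv hvY
      have h3 : X ⊓ Q ⊓ (Y ⊓ Q) = X ⊓ Y ⊓ Q := by
        ext x
        simp only [Submodule.mem_inf]
        tauto
      have h4 : (finrank F ↥(X ⊓ Y ⊓ Q) : ℤ) = (finrank F ↥(X ⊓ Y) : ℤ) - 1 :=
        aux_rank Q (X ⊓ Y) hQ hv ⟨hvX, hvY⟩
      have := hd X hX Y hY hXY
      unfold subspaceDist at this ⊢
      rw [h1, h2, h3, h4]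
      linarith
end

section
/- If C is a set of M k-dimensional subspaces of F_q^n with pairwise subspace distance at least d (where 0 < k < n), then there exist an (n-1)-dimensional subspace Q of F_q^n and a vector v ∉ Q such that |{X ∈ C : X ⊆ Q}| + |{X ∈ C : v ∈ X}| ≥ M(q^{n-k} + q^k - 2)/(q^n - 1). -/
open Module

section Aux

variable {F : Type*} [Field F] [Fintype F] {V : Type*} [AddCommGroup V] [Module F V] [Fintype V]

lemma aux_card_submodule (W : Submodule F V) [DecidablePred (· ∈ W)] :
    (Finset.univ.filter (· ∈ W)).card = Fintype.card F ^ finrank F W := by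
  rw [← Fintype.card_subtype]
  exact card_eq_pow_finrank

lemma aux_double_count {α β : Type*} (s : Finset α) (t : Finset β) (r : α → β → Prop)
    [∀ a b, Decidable (r a b)] :
    ∑ b ∈ t, (s.filter (fun a => r a b)).card = ∑ a ∈ s, (t.filter (fun b => r a b)).card := by
  simp_rw [Finset.card_filter]
  exact Finset.sum_comm

open scoped Classical in
lemma aux_count_hyperplanes [DecidableEq V]
    (e : V ≃ₗ[F] Module.Dual F V) (X : Submodule F V) :
    (Finset.univ.filter (fun w : V => w ≠ 0 ∧ X ≤ LinearMap.ker (e w))).card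
      = Fintype.card F ^ (finrank F V - finrank F X) - 1 := by
  classical
  set Wx : Submodule F V := X.dualAnnihilator.map (e.symm : Module.Dual F V →ₗ[F] V) with hWx
  have hmem : ∀ w : V, (X ≤ LinearMap.ker (e w)) ↔ w ∈ Wx := by
    intro w
    constructor
    · intro h
      refine Submodule.mem_map.mpr ⟨e w, ?_, e.symm_apply_apply w⟩
      rw [Submodule.mem_dualAnnihilator]
      exact fun x hx => LinearMap.mem_ker.mp (h hx)
    · intro hw x hx
      obtain ⟨φ, hφ, hφw⟩ := Submodule.mem_map.mp hw
      rw [Submodule.mem_dualAnnihilator] at hφ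
      rw [LinearMap.mem_ker]
      have hew : e w = φ := by
        rw [← hφw]
        simp
      rw [hew]
      exact hφ x hx
  have heq : Finset.univ.filter (fun w : V => w ≠ 0 ∧ X ≤ LinearMap.ker (e w))
      = (Finset.univ.filter (· ∈ Wx)).erase 0 := by
    ext w
    simp only [Finset.mem_filter, Finset.mem_univ, true_and, Finset.mem_erase]
    rw [hmem w]
  have h0 : (0 : V) ∈ Finset.univ.filter (· ∈ Wx) := by simp
  have hrk : finrank F Wx = finrank F V - finrank F X := by
    have h1 : finrank F Wx = finrank F X.dualAnnihilator :=
      LinearEquiv.finrank_map_eq e.symm _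
    have h2 : finrank F (V ⧸ X) = finrank F X.dualAnnihilator :=
      (Subspace.quotEquivAnnihilator X).finrank_eq
    have h3 := Submodule.finrank_quotient_add_finrank X
    omega
  rw [heq, Finset.card_erase_of_mem h0, aux_card_submodule, hrk]

end Aux

set_option maxHeartbeats 1600000 in
/-- If `C` is a set of `M` `k`-dimensional subspaces of `F_q^n` with pairwise subspace
distance at least `d` (with `0 < k < n`), then there exist an `(n-1)`-dimensional
subspace `Q` of `F_q^n` and a vector `v ∉ Q` such that
`|{X ∈ C : X ⊆ Q}| + |{X ∈ C : v ∈ X}| ≥ M (q^{n-k} + q^k - 2) / (q^n - 1)`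
(stated multiplicatively to avoid division). -/
theorem punctured_code_size (F : Type*) [Field F] [Fintype F] (n k d M : ℕ)
    (hk0 : 0 < k) (hkn : k < n)
    (C : Set (Submodule F (Fin n → F))) (hfin : C.Finite) (hM : Nat.card C = M)
    (hdim : ∀ X ∈ C, finrank F X = k)
    (hd : ∀ X ∈ C, ∀ Y ∈ C, X ≠ Y → (d : ℤ) ≤ subspaceDist X Y) :
    ∃ (Q : Submodule F (Fin n → F)) (v : Fin n → F),
      finrank F Q = n - 1 ∧ v ∉ Q ∧
      M * (Fintype.card F ^ (n - k) + Fintype.card F ^ k - 2) ≤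
        (Nat.card {X | X ∈ C ∧ X ≤ Q} + Nat.card {X | X ∈ C ∧ v ∈ X}) *
          (Fintype.card F ^ n - 1) := by
  classical
  set q := Fintype.card F with hqdef
  have hq : 2 ≤ q := Fintype.one_lt_card
  have hrankV : finrank F (Fin n → F) = n := Module.finrank_fin_fun F
  have hcardV : Fintype.card (Fin n → F) = q ^ n := by
    rw [card_eq_pow_finrank (K := F), hrankV]
  set s := hfin.toFinset with hsdef
  have hmem_s : ∀ X, X ∈ s ↔ X ∈ C := fun X => hfin.mem_toFinset
  have hsM : s.card = M := by
    rw [← hM, Nat.card_coe_set_eq, Set.ncard_eq_toFinset_card C hfin]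
  set e := (Pi.basisFun F (Fin n)).toDualEquiv with hedef
  -- Step 1 : averaging over nonzero vectors w (i.e. over hyperplanes ker (e w))
  set T : Finset (Fin n → F) := Finset.univ.filter (fun w => w ≠ 0) with hTdef
  have hTcard : T.card = q ^ n - 1 := by
    have : T = Finset.univ.erase 0 := by
      ext w; simp [hTdef]
    rw [this, Finset.card_erase_of_mem (Finset.mem_univ _), Finset.card_univ, hcardV]
  have hTne : T.Nonempty := by
    refine ⟨fun _ => 1, ?_⟩
    simp only [hTdef, Finset.mem_filter, Finset.mem_univ, true_and]
    intro h
    have := congrFun h ⟨0, by omega⟩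
    simpa using this
  have hsum1 : ∑ w ∈ T, (s.filter (fun X => X ≤ LinearMap.ker (e w))).card
      = M * (q ^ (n - k) - 1) := by
    rw [aux_double_count]
    have key : ∀ X ∈ s, (T.filter (fun w => X ≤ LinearMap.ker (e w))).card = q ^ (n - k) - 1 := by
      intro X hX
      have heq : (T.filter (fun w => X ≤ LinearMap.ker (e w))).card
          = (Finset.univ.filter (fun w : Fin n → F => w ≠ 0 ∧ X ≤ LinearMap.ker (e w))).card := by
        congr 1
        ext w
        simp only [hTdef, Finset.filter_filter, Finset.mem_filter, Finset.mem_univ, true_and]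
      rw [heq, aux_count_hyperplanes e X, hrankV, hdim X ((hmem_s X).1 hX)]
    rw [Finset.sum_congr rfl key, Finset.sum_const, hsM, smul_eq_mul]
  obtain ⟨w, hwT, hwmax⟩ := T.exists_max_image
    (fun w => (s.filter (fun X => X ≤ LinearMap.ker (e w))).card) hTne
  have hwne : w ≠ 0 := by
    simpa [hTdef] using hwT
  set Q := LinearMap.ker (e w) with hQdef
  set A := (s.filter (fun X => X ≤ Q)).card with hAdef
  have hA : M * (q ^ (n - k) - 1) ≤ (q ^ n - 1) * A := by
    rw [← hsum1, ← hTcard]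
    calc ∑ w' ∈ T, (s.filter (fun X => X ≤ LinearMap.ker (e w'))).card
        ≤ ∑ _w' ∈ T, A := Finset.sum_le_sum (fun w' hw' => hwmax w' hw')
      _ = T.card * A := by rw [Finset.sum_const, smul_eq_mul]
  -- finrank of Q
  have hewne : e w ≠ 0 := by
    intro h
    apply hwne
    have := congrArg e.symm h
    simpa using this
  have hsurj : Function.Surjective (e w) := by
    obtain ⟨x0, hx0⟩ : ∃ x, e w x ≠ 0 := by
      by_contra h
      push_neg at h
      exact hewne (LinearMap.ext h)
    intro c
    exact ⟨(c / e w x0) • x0, by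
      rw [map_smul, smul_eq_mul, div_mul_cancel₀ _ hx0]⟩
  have hQrank : finrank F Q = n - 1 := by
    have h1 := LinearMap.finrank_range_add_finrank_ker (e w)
    rw [LinearMap.range_eq_top.mpr hsurj, finrank_top, finrank_self, hrankV] at h1
    rw [hQdef]
    omega
  -- Step 2 : averaging over vectors outside Q
  set T' : Finset (Fin n → F) := Finset.univ.filter (fun v => v ∉ Q) with hT'def
  have hQcard : (Finset.univ.filter (· ∈ Q)).card = q ^ (n - 1) := by
    rw [aux_card_submodule, hQrank]
  have hT'card : T'.card = q ^ n - q ^ (n - 1) := by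
    have h := Finset.card_filter_add_card_filter_not (s := Finset.univ)
      (p := (· ∈ Q))
    rw [Finset.card_univ, hcardV, hQcard] at h
    have h2 : (Finset.univ.filter fun a => ¬ (· ∈ Q) a) = T' := by
      ext u
      simp [hT'def]
    rw [h2] at h
    omega
  have hT'ne : T'.Nonempty := by
    have hQne : Q ≠ ⊤ := by
      intro h
      rw [h, finrank_top, hrankV] at hQrank
      omega
    obtain ⟨v, hv⟩ : ∃ v, v ∉ Q := by
      by_contra h
      push_neg at h
      exact hQne (Submodule.eq_top_iff'.mpr h)
    exact ⟨v, by simp [hT'def, hv]⟩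
  -- each X ∈ C not contained in Q has exactly q^k - q^(k-1) vectors outside Q
  have hXout : ∀ X ∈ s, ¬ X ≤ Q →
      (T'.filter (fun v => v ∈ X)).card = q ^ k - q ^ (k - 1) := by
    intro X hX hXQ
    have hXk : finrank F X = k := hdim X ((hmem_s X).1 hX)
    have hsup : X ⊔ Q = ⊤ := by
      have hlt : Q < X ⊔ Q := by
        rcases lt_or_eq_of_le (le_sup_right : Q ≤ X ⊔ Q) with h | h
        · exact h
        · exact absurd (le_trans le_sup_left h.symm.le) hXQ
      have h1 : finrank F Q < finrank F ↥(X ⊔ Q) := Submodule.finrank_lt_finrank_of_lt hlt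
      have h2 : finrank F ↥(X ⊔ Q) ≤ n :=
        le_trans (Submodule.finrank_le _) hrankV.le
      apply Submodule.eq_top_of_finrank_eq
      rw [hrankV]
      omega
    have hinf : finrank F ↥(X ⊓ Q) = k - 1 := by
      have h := Submodule.finrank_sup_add_finrank_inf_eq X Q
      rw [hsup, finrank_top, hrankV, hXk, hQrank] at h
      omega
    have hXcard : (Finset.univ.filter (· ∈ X)).card = q ^ k := by
      rw [aux_card_submodule, hXk]
    have hXQcard : ((Finset.univ.filter (· ∈ X)).filter (· ∈ Q)).card = q ^ (k - 1) := by
      have : (Finset.univ.filter (· ∈ X)).filter (· ∈ Q)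
          = Finset.univ.filter (· ∈ X ⊓ Q) := by
        ext v
        simp [Finset.mem_filter, Submodule.mem_inf]
      rw [this, aux_card_submodule, hinf]
    have hsplit := Finset.card_filter_add_card_filter_not
      (s := Finset.univ.filter (· ∈ X)) (p := (· ∈ Q))
    beta_reduce at hsplit
    have heq : (T'.filter (fun v => v ∈ X)).card
        = ((Finset.univ.filter (· ∈ X)).filter (fun v => ¬ v ∈ Q)).card := by
      congr 1
      ext u
      simp only [hT'def, Finset.filter_filter, Finset.mem_filter, Finset.mem_univ, true_and]
      tauto
    rw [heq]
    omega
  have hAM : A ≤ M := by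
    rw [hAdef, ← hsM]
    exact Finset.card_filter_le _ _
  have hnegA : (s.filter (fun X => ¬ X ≤ Q)).card = M - A := by
    have h := Finset.card_filter_add_card_filter_not (s := s)
      (p := (fun X => X ≤ Q))
    rw [hsM] at h
    have h2 : (s.filter fun X => ¬ (fun X => X ≤ Q) X) = s.filter (fun X => ¬ X ≤ Q) := by
      rfl
    rw [h2] at h
    omega
  have hsum2 : (M - A) * (q ^ k - q ^ (k - 1)) ≤
      ∑ v ∈ T', (s.filter (fun X => v ∈ X)).card := by
    rw [aux_double_count]
    calc (M - A) * (q ^ k - q ^ (k - 1))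
        = ∑ X ∈ s.filter (fun X => ¬ X ≤ Q), (q ^ k - q ^ (k - 1)) := by
          rw [Finset.sum_const, hnegA, smul_eq_mul]
      _ = ∑ X ∈ s.filter (fun X => ¬ X ≤ Q), (T'.filter (fun v => v ∈ X)).card := by
          refine Finset.sum_congr rfl (fun X hX => ?_)
          rw [Finset.mem_filter] at hX
          exact (hXout X hX.1 hX.2).symm
      _ ≤ ∑ X ∈ s, (T'.filter (fun v => v ∈ X)).card :=
          Finset.sum_le_sum_of_subset (Finset.filter_subset _ _)
  obtain ⟨v, hvT', hvmax⟩ := T'.exists_max_image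
    (fun v => (s.filter (fun X => v ∈ X)).card) hT'ne
  have hvQ : v ∉ Q := by
    simpa [hT'def] using hvT'
  set B := (s.filter (fun X => v ∈ X)).card with hBdef
  have hB : (M - A) * (q ^ k - q ^ (k - 1)) ≤ (q ^ n - q ^ (n - 1)) * B := by
    calc (M - A) * (q ^ k - q ^ (k - 1))
        ≤ ∑ v' ∈ T', (s.filter (fun X => v' ∈ X)).card := hsum2
      _ ≤ ∑ _v' ∈ T', B := Finset.sum_le_sum (fun v' hv' => hvmax v' hv')
      _ = (q ^ n - q ^ (n - 1)) * B := by rw [Finset.sum_const, smul_eq_mul, hT'card]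
  -- identify the Nat.card quantities with A and B
  refine ⟨Q, v, hQrank, hvQ, ?_⟩
  have hcard1 : Nat.card {X | X ∈ C ∧ X ≤ Q} = A := by
    have h : {X | X ∈ C ∧ X ≤ Q} = ↑(s.filter (fun X => X ≤ Q)) := by
      ext X
      simp [hmem_s]
    rw [h, Nat.card_coe_set_eq, Set.ncard_coe_finset]
  have hcard2 : Nat.card {X | X ∈ C ∧ v ∈ X} = B := by
    have h : {X | X ∈ C ∧ v ∈ X} = ↑(s.filter (fun X => v ∈ X)) := by
      ext X
      simp [hmem_s]
    rw [h, Nat.card_coe_set_eq, Set.ncard_coe_finset]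
  rw [hcard1, hcard2]
  -- final arithmetic
  have hq1 : 1 ≤ q := by omega
  have hp1 : 1 ≤ q ^ (n - k) := Nat.one_le_pow _ _ (by omega)
  have hp2 : 1 ≤ q ^ n := Nat.one_le_pow _ _ (by omega)
  have hp3 : q ^ (k - 1) ≤ q ^ k := Nat.pow_le_pow_right hq1 (by omega)
  have hp4 : q ^ (n - 1) ≤ q ^ n := Nat.pow_le_pow_right hq1 (by omega)
  have hp5 : 2 ≤ q ^ (n - k) + q ^ k := by
    have := Nat.one_le_pow k q (by omega)
    omega
  have e2 : q ^ k = q * q ^ (k - 1) := by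
    conv_lhs => rw [show k = 1 + (k - 1) by omega]
    rw [pow_add, pow_one]
  have e3 : q ^ n = q * q ^ (n - 1) := by
    conv_lhs => rw [show n = 1 + (n - 1) by omega]
    rw [pow_add, pow_one]
  have e4 : q ^ (n - 1) = q ^ (n - k) * q ^ (k - 1) := by
    rw [← pow_add]
    congr 1
    omega
  zify [hp1, hp2, hp3, hp4, hp5, hAM] at hA hB ⊢
  have hq1' : (0:ℤ) < (q:ℤ) - 1 := by
    have : (2:ℤ) ≤ (q:ℤ) := by exact_mod_cast hq
    omega
  have e2' : ((q:ℤ) ^ k) = (q:ℤ) * (q:ℤ) ^ (k - 1) := by exact_mod_cast e2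
  have e3' : ((q:ℤ) ^ n) = (q:ℤ) * (q:ℤ) ^ (n - 1) := by exact_mod_cast e3
  have e4' : ((q:ℤ) ^ (n - 1)) = (q:ℤ) ^ (n - k) * (q:ℤ) ^ (k - 1) := by exact_mod_cast e4
  have hB2 : ((M:ℤ) - A) * (q:ℤ) ^ (k - 1) * ((q:ℤ) - 1)
      ≤ (q:ℤ) ^ (n - 1) * B * ((q:ℤ) - 1) := by
    calc ((M:ℤ) - A) * (q:ℤ) ^ (k - 1) * ((q:ℤ) - 1)
        = ((M:ℤ) - A) * ((q:ℤ) ^ k - (q:ℤ) ^ (k - 1)) := by rw [e2']; ring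
      _ ≤ ((q:ℤ) ^ n - (q:ℤ) ^ (n - 1)) * B := hB
      _ = (q:ℤ) ^ (n - 1) * B * ((q:ℤ) - 1) := by rw [e3']; ring
  have hB' : ((M:ℤ) - A) * (q:ℤ) ^ (k - 1) ≤ (q:ℤ) ^ (n - 1) * B :=
    le_of_mul_le_mul_right hB2 hq1'
  have hpow_pos : (0:ℤ) < (q:ℤ) ^ (n - 1) := by positivity
  rw [← mul_le_mul_iff_of_pos_right hpow_pos]
  have hP5 : (0:ℤ) ≤ (q:ℤ) ^ n - 1 := by
    have : (1:ℤ) ≤ (q:ℤ) ^ n := by exact_mod_cast hp2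
    omega
  have hP43 : (0:ℤ) ≤ (q:ℤ) ^ (n - 1) - (q:ℤ) ^ (k - 1) := by
    have h : q ^ (k - 1) ≤ q ^ (n - 1) := Nat.pow_le_pow_right hq1 (by omega)
    have : ((q:ℤ) ^ (k - 1)) ≤ (q:ℤ) ^ (n - 1) := by exact_mod_cast h
    omega
  have step1 : ((M:ℤ) - A) * (q:ℤ) ^ (k - 1) * ((q:ℤ) ^ n - 1)
      ≤ (q:ℤ) ^ (n - 1) * B * ((q:ℤ) ^ n - 1) :=
    mul_le_mul_of_nonneg_right hB' hP5
  have step2 : (M:ℤ) * ((q:ℤ) ^ (n - k) - 1) * ((q:ℤ) ^ (n - 1) - (q:ℤ) ^ (k - 1))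
      ≤ ((q:ℤ) ^ n - 1) * A * ((q:ℤ) ^ (n - 1) - (q:ℤ) ^ (k - 1)) :=
    mul_le_mul_of_nonneg_right hA hP43
  have key : (M:ℤ) * ((q:ℤ) ^ (n - k) - 1) * ((q:ℤ) ^ (n - 1) - (q:ℤ) ^ (k - 1))
      + (M:ℤ) * (q:ℤ) ^ (k - 1) * ((q:ℤ) ^ n - 1)
      = (M:ℤ) * ((q:ℤ) ^ (n - k) + (q:ℤ) ^ k - 2) * (q:ℤ) ^ (n - 1) := by
    linear_combination (M:ℤ) * e4' + (M:ℤ) * (q:ℤ) ^ (k - 1) * e3'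
      - (M:ℤ) * (q:ℤ) ^ (n - 1) * e2'
  linarith [step1, step2, key]
end

section
/- Let F be an m × η Ferrers diagram and δ ≥ 1. The minimum number of dots whose removal from F leaves at most δ - 1 rows of dots or at most δ - 1 columns of dots is an upper bound on the dimension of any F_q-linear Ferrers diagram rank-metric code supported on F with minimum rank distance δ. -/
open Module

/-- If all rows of `A` outside `S` are zero, then `A.rank ≤ S.card`. -/
lemma rank_le_card_support_rows {F : Type*} [Field F] {m η : ℕ}
    (A : Matrix (Fin m) (Fin η) F) (S : Finset (Fin m))
    (h : ∀ r, r ∉ S → ∀ c, A r c = 0) : A.rank ≤ S.card := by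
  classical
  have hrange : ∀ v ∈ LinearMap.range A.mulVecLin, ∀ r ∉ S, v r = 0 := by
    rintro v ⟨x, rfl⟩ r hr
    simp only [Matrix.mulVecLin_apply, Matrix.mulVec, dotProduct]
    exact Finset.sum_eq_zero fun c _ => by simp [h r hr c]
  let e : (Fin m → F) →ₗ[F] ({r // r ∈ S} → F) :=
    LinearMap.funLeft F F (Subtype.val : {r // r ∈ S} → Fin m)
  let f : LinearMap.range A.mulVecLin →ₗ[F] ({r // r ∈ S} → F) :=
    e.comp (Submodule.subtype _)
  have hf : Function.Injective f := by
    rw [← LinearMap.ker_eq_bot, LinearMap.ker_eq_bot']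
    rintro ⟨v, hv⟩ hfv
    ext r
    by_cases hr : r ∈ S
    · exact congrFun hfv ⟨r, hr⟩
    · exact hrange v hv r hr
  calc A.rank = finrank F (LinearMap.range A.mulVecLin) := rfl
    _ ≤ finrank F ({r // r ∈ S} → F) :=
        LinearMap.finrank_le_finrank_of_injective hf
    _ = S.card := by
        rw [Module.finrank_pi]
        exact Fintype.card_coe _

/-- If all columns of `A` outside `S` are zero, then `A.rank ≤ S.card`. -/
lemma rank_le_card_support_cols {F : Type*} [Field F] {m η : ℕ}
    (A : Matrix (Fin m) (Fin η) F) (S : Finset (Fin η))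
    (h : ∀ c, c ∉ S → ∀ r, A r c = 0) : A.rank ≤ S.card := by
  rw [← Matrix.rank_transpose]
  exact rank_le_card_support_rows A.transpose S h

/-- Corollary of the Ferrers diagram bound: if removing a set `R` of dots from the
Ferrers diagram `D` leaves at most `δ - 1` rows of dots or at most `δ - 1` columns of
dots, then `|R|` is an upper bound on the dimension of any `F_q`-linear Ferrers diagram
rank-metric code supported on `D` with minimum rank distance `δ`.  In particular the
minimum number of such dots is an upper bound. -/
theorem ferrers_removal_bound (F : Type*) [Field F] [Fintype F] (m η δ : ℕ)
    (D : Finset (Fin m × Fin η))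
    (hright : ∀ p ∈ D, ∀ c : Fin η, p.2 ≤ c → (p.1, c) ∈ D)
    (hup : ∀ p ∈ D, ∀ r : Fin m, r ≤ p.1 → (r, p.2) ∈ D)
    (C : Submodule F (Matrix (Fin m) (Fin η) F))
    (hsupp : ∀ A ∈ C, ∀ r c, (r, c) ∉ D → A r c = 0)
    (hrank : ∀ A ∈ C, A ≠ 0 → δ ≤ A.rank)
    (R : Finset (Fin m × Fin η)) (hR : R ⊆ D)
    (hrem : ((D \ R).image Prod.fst).card ≤ δ - 1 ∨
            ((D \ R).image Prod.snd).card ≤ δ - 1) :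
    finrank F C ≤ R.card := by
  classical
  -- restriction to the coordinates in R
  let Φ : C →ₗ[F] ({p // p ∈ R} → F) :=
    { toFun := fun A p => A.1 p.1.1 p.1.2
      map_add' := fun A B => rfl
      map_smul' := fun c A => rfl }
  have hΦ : Function.Injective Φ := by
    rw [← LinearMap.ker_eq_bot, LinearMap.ker_eq_bot']
    rintro ⟨A, hA⟩ hz
    have hRzero : ∀ p ∈ R, A p.1 p.2 = 0 := fun p hp => congrFun hz ⟨p, hp⟩
    -- A is supported on D \ R
    have hDR : ∀ r c, (r, c) ∉ D \ R → A r c = 0 := by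
      intro r c hrc
      rw [Finset.mem_sdiff, not_and_or, not_not] at hrc
      rcases hrc with h | h
      · exact hsupp A hA r c h
      · exact hRzero (r, c) h
    suffices hA0 : A = 0 by exact Subtype.ext hA0
    by_contra hA0
    obtain ⟨r, c, hne⟩ : ∃ r c, A r c ≠ 0 := by
      by_contra hall
      push_neg at hall
      exact hA0 (by ext r c; simp [hall r c])
    have hmem : (r, c) ∈ D \ R := by
      by_contra hm; exact hne (hDR r c hm)
    have h1 : δ ≤ A.rank := hrank A hA hA0
    rcases hrem with hrow | hcol
    · have h2 : A.rank ≤ ((D \ R).image Prod.fst).card := by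
        apply rank_le_card_support_rows
        intro r' hr' c'
        by_contra hne'
        exact hr' (Finset.mem_image_of_mem Prod.fst (by
          by_contra hm; exact hne' (hDR r' c' hm)))
      have h3 : 1 ≤ ((D \ R).image Prod.fst).card :=
        Finset.card_pos.mpr ⟨r, Finset.mem_image_of_mem Prod.fst hmem⟩
      omega
    · have h2 : A.rank ≤ ((D \ R).image Prod.snd).card := by
        apply rank_le_card_support_cols
        intro c' hc' r'
        by_contra hne'
        exact hc' (Finset.mem_image_of_mem Prod.snd (by
          by_contra hm; exact hne' (hDR r' c' hm)))
      have h3 : 1 ≤ ((D \ R).image Prod.snd).card :=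
        Finset.card_pos.mpr ⟨c, Finset.mem_image_of_mem Prod.snd hmem⟩
      omega
  calc finrank F C ≤ finrank F ({p // p ∈ R} → F) :=
        LinearMap.finrank_le_finrank_of_injective hΦ
    _ = R.card := by
        rw [Module.finrank_pi]
        exact Fintype.card_coe _
end

section
/- Let C be a set of k-dimensional subspaces of F_q^n with minimum subspace distance 2δ, let Q be a hyperplane of F_q^n, v ∉ Q, and let C' = C_Q ∪ C_{Q,v} be the corresponding punctured code inside Q. Suppose X ∈ C gives rise to the codeword X' ∈ C' (either X' = X ⊆ Q or X' = X ∩ Q with v ∈ X). If Y' is a subspace of Q with d_S(X', Y') ≤ δ - 1, then X is the unique codeword of C satisfying d_S(X, Z) ≤ δ - 1, where Z = Y' if dim Y' has the appropriate parity (matching the case analysis on δ and k mod 2) and Z = Y' ∪ (v + Y') (the subspace spanned by Y' and v) otherwise. -/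
open Module

lemma subspaceDist_comm {F M : Type*} [Field F] [AddCommGroup M] [Module F M]
    (U V : Submodule F M) : subspaceDist U V = subspaceDist V U := by
  simp only [subspaceDist]
  rw [inf_comm]
  ring

lemma subspaceDist_triangle {F M : Type*} [Field F] [AddCommGroup M] [Module F M]
    [FiniteDimensional F M] (U V W : Submodule F M) :
    subspaceDist U W ≤ subspaceDist U V + subspaceDist V W := by
  have h1 := Submodule.finrank_sup_add_finrank_inf_eq (U ⊓ V) (V ⊓ W)
  have h2 : (U ⊓ V) ⊔ (V ⊓ W) ≤ V := sup_le inf_le_right inf_le_left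
  have h3 : (U ⊓ V) ⊓ (V ⊓ W) ≤ U ⊓ W :=
    le_inf (inf_le_left.trans inf_le_left) (inf_le_right.trans inf_le_right)
  have h2' := Submodule.finrank_mono h2
  have h3' := Submodule.finrank_mono h3
  simp only [subspaceDist]
  omega

/-- Correctness of the decoding algorithm for punctured codes.  `C` is a constant
dimension code: all codewords have dimension `k` and pairwise subspace distance at
least `2δ`.  `Q` is a hyperplane of `F_q^n`, `v ∉ Q`.  A codeword `X ∈ C` gives rise to
a punctured codeword `X'` (either `X' = X ⊆ Q`, or `X' = X ⊓ Q` with `v ∈ X`).  Suppose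
`Y'` is a subspace of `Q` with `d_S(X', Y') ≤ δ - 1` and let `Z` be defined by the
parity rule: for `δ` even, `Z = span(Y' ∪ {v})` if `dim Y' ≡ k (mod 2)` and `Z = Y'`
otherwise; for `δ` odd, `Z = Y'` if `dim Y' ≡ k (mod 2)` and `Z = span(Y' ∪ {v})`
otherwise.  Then `d_S(X, Z) ≤ δ - 1`, and `X` is the unique codeword of `C` with this
property, so the minimum-distance decoder of `C` applied to `Z` returns `X`. -/
theorem punctured_decoding_correct (F : Type*) [Field F] [Fintype F] (n k δ : ℕ)
    (C : Set (Submodule F (Fin n → F)))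
    (hdim : ∀ X ∈ C, finrank F X = k)
    (hd : ∀ X ∈ C, ∀ Y ∈ C, X ≠ Y → 2 * (δ : ℤ) ≤ subspaceDist X Y)
    (Q : Submodule F (Fin n → F)) (hQ : finrank F Q = n - 1)
    (v : Fin n → F) (hv : v ∉ Q)
    (X : Submodule F (Fin n → F)) (hX : X ∈ C)
    (X' : Submodule F (Fin n → F))
    (hX' : (X ≤ Q ∧ X' = X) ∨ (v ∈ X ∧ X' = X ⊓ Q))
    (Y' : Submodule F (Fin n → F)) (hY' : Y' ≤ Q)
    (hclose : subspaceDist X' Y' ≤ (δ : ℤ) - 1)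
    (Z : Submodule F (Fin n → F))
    (hZ : Z = if (Even δ ↔ finrank F Y' % 2 = k % 2)
              then Y' ⊔ Submodule.span F {v} else Y') :
    subspaceDist X Z ≤ (δ : ℤ) - 1 ∧
    ∀ W ∈ C, subspaceDist W Z ≤ (δ : ℤ) - 1 → W = X := by
  have hvne : v ≠ 0 := fun h => hv (h ▸ Q.zero_mem)
  have hspan : finrank F (Submodule.span F {v}) = 1 := finrank_span_singleton hvne
  -- span v ⊓ Q = ⊥
  have hvQ : Submodule.span F {v} ⊓ Q = ⊥ := by
    rw [eq_bot_iff]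
    rintro x hx
    obtain ⟨hx1, hx2⟩ := Submodule.mem_inf.mp hx
    obtain ⟨c, rfl⟩ := Submodule.mem_span_singleton.mp hx1
    rcases eq_or_ne c 0 with rfl | hc
    · simp
    · exact absurd (by simpa [hc] using Q.smul_mem c⁻¹ hx2) hv
  have hYv : Y' ⊓ Submodule.span F {v} = ⊥ :=
    le_bot_iff.mp (le_trans (inf_le_inf_right _ hY') (by rw [inf_comm, hvQ]))
  -- dim (Y' ⊔ span v) = dim Y' + 1
  have hsupdim : finrank F ↥(Y' ⊔ Submodule.span F {v}) = finrank F Y' + 1 := by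
    have := Submodule.finrank_sup_add_finrank_inf_eq Y' (Submodule.span F {v})
    rw [hYv] at this
    simp only [finrank_bot] at this
    omega
  -- (Y' ⊔ span v) ⊓ Q = Y'
  have hsupQ : (Y' ⊔ Submodule.span F {v}) ⊓ Q = Y' := by
    rw [sup_inf_assoc_of_le _ hY', hvQ, sup_bot_eq]
  have hEv : Even δ ↔ δ % 2 = 0 := Nat.even_iff
  -- main distance bound
  have main : subspaceDist X Z ≤ (δ : ℤ) - 1 := by
    have hXk : finrank F X = k := hdim X hX
    rcases hX' with ⟨hXQ, hEq⟩ | ⟨hvX, hEq⟩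
    · -- X ≤ Q, X' = X
      subst hEq
      by_cases hc : (Even δ ↔ finrank F Y' % 2 = k % 2)
      · rw [if_pos hc] at hZ
        subst hZ
        rw [hEv] at hc
        -- X ⊓ (Y' ⊔ span v) = X ⊓ Y'
        have hinf : X' ⊓ (Y' ⊔ Submodule.span F {v}) = X' ⊓ Y' := by
          conv_lhs => rw [← inf_eq_left.mpr hXQ, inf_assoc, inf_comm Q, hsupQ]
        have g1 : finrank F ↥(X' ⊓ (Y' ⊔ Submodule.span F {v})) = finrank F ↥(X' ⊓ Y') := by
          rw [hinf]
        simp only [subspaceDist] at hclose ⊢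
        omega
      · rw [if_neg hc] at hZ
        subst hZ
        exact hclose
    · -- v ∈ X, X' = X ⊓ Q
      subst hEq
      -- n ≥ 1
      have hn : 1 ≤ n := by
        rcases Nat.eq_zero_or_pos n with rfl | h
        · have : v = 0 := Subsingleton.elim v 0
          exact absurd (this ▸ Q.zero_mem) hv
        · exact h
      -- X ⊔ Q has full rank n, so dim(X ⊓ Q) = k - 1
      have hlt : Q < X ⊔ Q := lt_of_le_of_ne le_sup_right
        (fun h => hv (h ▸ (le_sup_left : X ≤ X ⊔ Q) hvX))
      have h1 := Submodule.finrank_lt_finrank_of_lt hlt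
      have h2 : finrank F ↥(X ⊔ Q) ≤ n := by
        have := Submodule.finrank_le (X ⊔ Q)
        rwa [Module.finrank_fin_fun] at this
      have h3 := Submodule.finrank_sup_add_finrank_inf_eq X Q
      rw [hXk, hQ] at h3
      have hXQdim : finrank F ↥(X ⊓ Q) + 1 = k := by omega
      have hXY : X ⊓ Q ⊓ Y' = X ⊓ Y' := by
        rw [inf_assoc, inf_eq_right.mpr hY']
      have e1 : finrank F ↥(X ⊓ Q ⊓ Y') = finrank F ↥(X ⊓ Y') := by rw [hXY]
      by_cases hc : (Even δ ↔ finrank F Y' % 2 = k % 2)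
      · rw [if_pos hc] at hZ
        subst hZ
        -- X ⊓ (Y' ⊔ span v) = (X ⊓ Y') ⊔ span v
        have hsv : Submodule.span F {v} ≤ X := by
          rw [Submodule.span_le]; simpa using hvX
        have hinf : X ⊓ (Y' ⊔ Submodule.span F {v})
            = (X ⊓ Y') ⊔ Submodule.span F {v} := by
          rw [inf_comm, sup_comm Y', sup_inf_assoc_of_le _ hsv, inf_comm Y' X, sup_comm]
        have hbot : (X ⊓ Y') ⊓ Submodule.span F {v} = ⊥ :=
          le_bot_iff.mp (le_trans (inf_le_inf_right _ inf_le_right) hYv.le)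
        have g1 : finrank F ↥(X ⊓ (Y' ⊔ Submodule.span F {v}))
            = finrank F ↥(X ⊓ Y') + 1 := by
          rw [hinf]
          have := Submodule.finrank_sup_add_finrank_inf_eq (X ⊓ Y') (Submodule.span F {v})
          rw [hbot] at this
          simp only [finrank_bot] at this
          omega
        simp only [subspaceDist] at hclose ⊢
        omega
      · rw [if_neg hc] at hZ
        subst hZ
        rw [hEv] at hc
        simp only [subspaceDist] at hclose ⊢
        omega
  refine ⟨main, fun W hW hWZ => ?_⟩
  by_contra hne
  have h2δ := hd W hW X hX hne
  have tri := subspaceDist_triangle W Z X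
  rw [subspaceDist_comm Z X] at tri
  omega
end
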